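/- arXiv:1306.6744 — 2 statements merged into one kernel-verified Lean document; each statement's English description precedes it below -/
import Mathlib

section
/- For every n ≥ 1, the sum over all Dyck paths β of length 2n+2 of the product ∏_{i=1}^n h_i*(β) equals 2·4·6···(2n), where h_i*(β) is the height of the i-th down step minus 1 if no up step lies to the right of that down step, and otherwise equals the height. -/
open Finset

/-- `D ⊆ {1,…,L}` is the set of down steps of a Dyck path of length `L`:
it has `L/2` elements and every prefix has at least as many up steps as down steps. -/
def IsDyck (L : ℕ) (D : Finset ℕ) : Prop :=
  D ⊆ Finset.Icc 1 L ∧ 2 * D.card = L ∧ ∀ k ≤ L, 2 * (D.filter (· ≤ k)).card ≤ k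

instance (L : ℕ) : DecidablePred (IsDyck L) := fun D => by
  unfold IsDyck; infer_instance

/-- The collection of all Dyck paths (encoded by their down-step sets) of length `L`. -/
def dyckPaths (L : ℕ) : Finset (Finset ℕ) :=
  (Finset.Icc 1 L).powerset.filter (IsDyck L)

/-- The position (in `{1,…,L}`) of the `i`-th down step (`1`-indexed). -/
def dstep (D : Finset ℕ) (i : ℕ) : ℕ := (D.sort (· ≤ ·)).getD (i - 1) 0

/-- The height `h_i` of the `i`-th down step of a Dyck path:  the step goes from
`(d_i - 1, h_i)` to `(d_i, h_i - 1)`; equivalently `h_i = d_i + 1 - 2 i`. -/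
def ht (D : Finset ℕ) (i : ℕ) : ℕ := dstep D i + 1 - 2 * i

/-- The modified height `h_i^*`: equal to `h_i - 1` if there is no up step to the right of
the `i`-th down step, and to `h_i` otherwise. -/
def hstar (L : ℕ) (D : Finset ℕ) (i : ℕ) : ℕ :=
  if Finset.Ioc (dstep D i) L ⊆ D then ht D i - 1 else ht D i

/-- `crossout w k` is the pair (positions marked A, positions marked B) after `k` rounds of
the crossout procedure: in each round, first mark B at the unmarked position with the smallest
value `w i`, then mark A at the leftmost unmarked position. -/
def crossout {N : ℕ} (w : Equiv.Perm (Fin N)) : ℕ → Finset (Fin N) × Finset (Fin N)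
  | 0 => (∅, ∅)
  | k + 1 =>
    let p := crossout w k
    let u := (Finset.univ : Finset (Fin N)) \ (p.1 ∪ p.2)
    if hu : u.Nonempty then
      let b := w.symm ((u.image w).min' (hu.image _))
      if ha : (u.erase b).Nonempty then
        (insert ((u.erase b).min' ha) p.1, insert b p.2)
      else (p.1, insert b p.2)
    else p

/-- The set of positions marked A under the crossout procedure. -/
def markA {N : ℕ} (w : Equiv.Perm (Fin N)) : Finset (Fin N) := (crossout w N).1

/-- The set of positions marked B under the crossout procedure. -/
def markB {N : ℕ} (w : Equiv.Perm (Fin N)) : Finset (Fin N) := (crossout w N).2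

/-- Down-step set of Alice's path `p_A(w)`:  the values (in `{1,…,N}`) at positions marked A. -/
def pAset {N : ℕ} (w : Equiv.Perm (Fin N)) : Finset ℕ :=
  (markA w).image (fun a => Fin.val (w a) + 1)

/-- Down-step set of Bob's path `p_B(w)`:  `{b + 1 : b marked B} ∪ {N + 2}`
(positions taken in `{1,…,N}`, so `b + 1` becomes `(b : ℕ) + 2`). -/
def pBset {N : ℕ} (w : Equiv.Perm (Fin N)) : Finset ℕ :=
  insert (N + 2) ((markB w).image (fun b => Fin.val b + 2))

/-- Number of AA inversions of `w`. -/
def aaInv {N : ℕ} (w : Equiv.Perm (Fin N)) : ℕ :=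
  (Finset.univ.filter (fun p : Fin N × Fin N =>
    p.1 < p.2 ∧ w p.2 < w p.1 ∧ p.1 ∈ markA w ∧ p.2 ∈ markA w)).card

/-- Number of BB inversions of `w`. -/
def bbInv {N : ℕ} (w : Equiv.Perm (Fin N)) : ℕ :=
  (Finset.univ.filter (fun p : Fin N × Fin N =>
    p.1 < p.2 ∧ w p.2 < w p.1 ∧ p.1 ∈ markB w ∧ p.2 ∈ markB w)).card

/-- Number of AB inversions of `w`. -/
def abInv {N : ℕ} (w : Equiv.Perm (Fin N)) : ℕ :=
  (Finset.univ.filter (fun p : Fin N × Fin N =>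
    p.1 < p.2 ∧ w p.2 < w p.1 ∧ p.1 ∈ markA w ∧ p.2 ∈ markB w)).card

/-- Total number of inversions of `w`. -/
def invW {N : ℕ} (w : Equiv.Perm (Fin N)) : ℕ :=
  (Finset.univ.filter (fun p : Fin N × Fin N => p.1 < p.2 ∧ w p.2 < w p.1)).card

/-- The statistic `z(w) = #{i < j : w i < w j and i is marked B}`. -/
def zstat {N : ℕ} (w : Equiv.Perm (Fin N)) : ℕ :=
  (Finset.univ.filter (fun p : Fin N × Fin N =>
    p.1 < p.2 ∧ w p.1 < w p.2 ∧ p.1 ∈ markB w)).card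

/-- Label carried by the down step of `p_A` corresponding to the A-position `a`:
one plus the number of A-positions to the left of `a` with larger value. -/
def labelA {N : ℕ} (w : Equiv.Perm (Fin N)) (a : Fin N) : ℕ :=
  1 + ((markA w).filter (fun a' => a' < a ∧ w a < w a')).card

/-- The label sequence `ℓ` of `p_A(w)`: `ellSeq w r` is the label on the `r`-th down step. -/
def ellSeq {N : ℕ} (w : Equiv.Perm (Fin N)) (r : ℕ) : ℕ :=
  ∑ a ∈ (markA w).filter (fun a => Fin.val (w a) + 1 = dstep (pAset w) r), labelA w a

/-- Label carried by the down step of `p_B` corresponding to the B-position `b`: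
one plus the number of B-positions to the right of `b` with smaller value. -/
def labelB {N : ℕ} (w : Equiv.Perm (Fin N)) (b : Fin N) : ℕ :=
  1 + ((markB w).filter (fun b' => w b' < w b ∧ b < b')).card

/-- The label sequence `m` of `p_B(w)`: `emSeq w r` is the label on the `r`-th down step. -/
def emSeq {N : ℕ} (w : Equiv.Perm (Fin N)) (r : ℕ) : ℕ :=
  ∑ b ∈ (markB w).filter (fun b => Fin.val b + 2 = dstep (pBset w) r), labelB w b

/-- The `q`-integer `[k]_q = 1 + q + ⋯ + q^{k-1}` in `ℤ[q]`. -/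
noncomputable def qint (k : ℕ) : Polynomial ℤ := ∑ j ∈ Finset.range k, Polynomial.X ^ j

/-- The `q`-integer `[k]` in the variable `X v` of the two-variable polynomial ring. -/
noncomputable def qint2 (v : Fin 2) (k : ℕ) : MvPolynomial (Fin 2) ℤ :=
  ∑ j ∈ Finset.range k, (MvPolynomial.X v) ^ j

/-- `M` is a perfect matching of `{1,…,2n}`: a family of pairwise disjoint 2-element sets
whose union is `{1,…,2n}`. -/
def IsMatching (n : ℕ) (M : Finset (Finset ℕ)) : Prop :=
  (∀ e ∈ M, e.card = 2) ∧ (M : Set (Finset ℕ)).PairwiseDisjoint id ∧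
    M.biUnion id = Finset.Icc 1 (2 * n)


section Aux
open Nat

/-- odd double factorial -/
def dfac : ℕ → ℕ
  | 0 => 1
  | 1 => 1
  | (k+2) => (k+2) * dfac k

def Vfun : ℕ → ℕ → ℕ
  | 0, c => if c ≤ 1 then 1 else 0
  | (m+1), c => ∑ h ∈ Finset.Icc c (m+2),
      (h - if h = m + 2 then 1 else 0) * Vfun m (max (h-1) 1)

lemma dfac_pos (k : ℕ) : 0 < dfac k := by
  induction k using dfac.induct <;> simp [dfac] <;> positivity

lemma Vfun_peel (m c : ℕ) (hc : c ≤ m + 2) :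
    Vfun (m+1) c = (c - if c = m + 2 then 1 else 0) * Vfun m (max (c-1) 1)
      + Vfun (m+1) (c+1) := by
  rw [show Vfun (m+1) c = ∑ h ∈ Finset.Icc c (m+2),
      (h - if h = m + 2 then 1 else 0) * Vfun m (max (h-1) 1) from rfl]
  rw [show Finset.Icc c (m+2) = insert c (Finset.Icc (c+1) (m+2)) by
    ext x; simp [Finset.mem_Icc, Finset.mem_insert]; omega]
  rw [Finset.sum_insert (by simp [Finset.mem_Icc])]
  rfl

lemma Vfun_top (m c : ℕ) (hc : m + 3 ≤ c) : Vfun (m+1) c = 0 := by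
  show (∑ h ∈ Finset.Icc c (m+2), _) = 0
  rw [Finset.Icc_eq_empty (by omega)]; simp

lemma dfac_succ (k : ℕ) : dfac (k+2) = (k+2) * dfac k := rfl

theorem VProp (m : ℕ) :
    (Vfun m (m+1) = m !) ∧
      (∀ c, 1 ≤ c → c ≤ m → dfac (2*m+1-2*c) * Vfun m c = (2*m+1-c) !) := by
  induction m with
  | zero =>
    refine ⟨by simp [Vfun], fun c h1 h2 => absurd h2 (by omega)⟩
  | succ m ih =>
    obtain ⟨hq, hf⟩ := ih
    have hQ : Vfun (m+1) (m+2) = (m+1)! := by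
      rw [Vfun_peel m (m+2) le_rfl, Vfun_top m (m+3) le_rfl, if_pos rfl]
      rw [show max (m+2-1) 1 = m+1 by omega, hq, show m+2-1 = m+1 from rfl,
        Nat.factorial_succ, add_zero]
    refine ⟨hQ, ?_⟩
    have key : ∀ t, t ≤ m → dfac (2*(m+1)+1-2*(m+1-t)) * Vfun (m+1) (m+1-t)
        = (2*(m+1)+1-(m+1-t)) ! := by
      intro t
      induction t with
      | zero =>
        intro _
        simp only [Nat.sub_zero]
        rw [show 2*(m+1)+1-2*(m+1) = 1 by omega, show 2*(m+1)+1-(m+1) = m+2 by omega,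
          show dfac 1 = 1 from rfl, one_mul]
        rw [Vfun_peel m (m+1) (by omega), if_neg (by omega), hQ]
        simp only [Nat.sub_zero]
        rcases Nat.eq_zero_or_pos m with hm | hm
        · subst hm; norm_num [Vfun]
        · rw [show max (m+1-1) 1 = m by omega]
          have h5 := hf m hm le_rfl
          rw [show 2*m+1-2*m = 1 by omega, show 2*m+1-m = m+1 by omega,
            show dfac 1 = 1 from rfl, one_mul] at h5
          rw [h5, show (m+2)! = (m+2)*(m+1)! from rfl]
          ring
      | succ t iht =>
        intro ht
        have iht' := iht (by omega)
        set c := m + 1 - (t+1) with hcdef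
        clear_value c
        have hc1 : 1 ≤ c := by omega
        have hcm : c ≤ m := by omega
        rw [show m + 1 - t = c + 1 by omega] at iht'
        rw [show 2*(m+1)+1-2*(c+1) = 2*m+1-2*c by omega,
          show 2*(m+1)+1-(c+1) = 2*m+2-c by omega] at iht'
        rw [show 2*(m+1)+1-2*c = 2*m+3-2*c by omega, show 2*(m+1)+1-c = 2*m+3-c by omega]
        rw [Vfun_peel m c (by omega), if_neg (by omega)]
        simp only [Nat.sub_zero]
        have hchild : dfac (2*m+3-2*c) * Vfun m (max (c-1) 1) = (2*m+2-c) ! := by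
          rcases Nat.lt_or_ge c 2 with hc2 | hc2
          · have hc1' : c = 1 := by omega
            subst hc1'
            rw [show max (1-1) 1 = 1 from rfl]
            have h5 := hf 1 (le_refl 1) (by omega)
            rw [show 2*m+1-2*1 = 2*m-1 by omega, show 2*m+1-1 = 2*m by omega] at h5
            rw [show 2*m+3-2*1 = (2*m-1)+2 by omega, dfac_succ, mul_assoc, h5]
            rw [show 2*m+2-1 = (2*m)+1 by omega, Nat.factorial_succ]
            congr 1
            omega
          · rw [show max (c-1) 1 = c-1 by omega]
            have h6 := hf (c-1) (by omega) (by omega)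
            rw [show 2*m+1-2*(c-1) = 2*m+3-2*c by omega,
              show 2*m+1-(c-1) = 2*m+2-c by omega] at h6
            exact h6
        rw [mul_add]
        rw [mul_comm c (Vfun m (max (c-1) 1)), ← mul_assoc, hchild]
        rw [show 2*m+3-2*c = (2*m+1-2*c)+2 by omega, dfac_succ, mul_assoc, iht']
        rw [show 2*m+3-c = (2*m+2-c)+1 by omega, Nat.factorial_succ]
        rw [mul_comm ((2*m+2-c) !) c, ← add_mul]
        congr 1
        omega
    intro c h1 h2
    have := key (m+1-c) (by omega)
    rw [show m+1-(m+1-c) = c by omega] at this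
    exact this

lemma dfac_prod (n : ℕ) : dfac (2*n-1) * ∏ i ∈ Finset.range n, (2*i+2) = (2*n) ! := by
  induction n with
  | zero => simp [dfac]
  | succ n ih =>
    rcases Nat.eq_zero_or_pos n with hn | hn
    · subst hn; norm_num [dfac]
    rw [Finset.prod_range_succ]
    rw [show 2*(n+1)-1 = (2*n-1)+2 by omega, dfac_succ, show (2*n-1)+2 = 2*n+1 by omega]
    calc (2*n+1) * dfac (2*n-1) * ((∏ i ∈ Finset.range n, (2*i+2)) * (2*n+2))
        = (2*n+2)*(2*n+1) * (dfac (2*n-1) * ∏ i ∈ Finset.range n, (2*i+2)) := by ring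
      _ = (2*n+2)*(2*n+1) * (2*n) ! := by rw [ih]
      _ = (2*(n+1)) ! := by
          rw [show 2*(n+1) = (2*n+1)+1 by omega, Nat.factorial_succ, Nat.factorial_succ]
          ring

lemma Vfun_eq_prod (n : ℕ) (hn : 1 ≤ n) :
    Vfun n 1 = ∏ i ∈ Finset.range n, (2*i+2) := by
  have h1 := (VProp n).2 1 le_rfl hn
  rw [show 2*n+1-2*1 = 2*n-1 by omega, show 2*n+1-1 = 2*n by omega] at h1
  have h2 := dfac_prod n
  exact Nat.eq_of_mul_eq_mul_left (dfac_pos _) (by rw [h1, h2])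


def wt : ℕ → List ℕ → ℕ
  | _, [] => 1
  | m, (h :: t) => (h - if h = m + 1 then 1 else 0) * wt (m-1) t

def HSet : ℕ → ℕ → Finset (List ℕ)
  | 0, c => if c ≤ 1 then {([] : List ℕ)} else ∅
  | (m+1), c => (Finset.Icc c (m+2)).biUnion
      (fun h => (HSet m (max (h-1) 1)).image (h :: ·))

lemma sum_wt (m : ℕ) : ∀ c, (∑ l ∈ HSet m c, wt m l) = Vfun m c := by
  induction m with
  | zero =>
    intro c
    by_cases hc : c ≤ 1 <;> simp [HSet, Vfun, wt, hc]
  | succ m ih =>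
    intro c
    rw [show HSet (m+1) c = (Finset.Icc c (m+2)).biUnion
      (fun h => (HSet m (max (h-1) 1)).image (h :: ·)) from rfl]
    rw [Finset.sum_biUnion]
    · rw [show Vfun (m+1) c = ∑ h ∈ Finset.Icc c (m+2),
        (h - if h = m + 2 then 1 else 0) * Vfun m (max (h-1) 1) from rfl]
      refine Finset.sum_congr rfl (fun h _ => ?_)
      rw [Finset.sum_image (by intro x _ y _ hxy; exact (List.cons.injEq _ _ _ _ ▸ hxy).2)]
      rw [← ih (max (h-1) 1), Finset.mul_sum]
      refine Finset.sum_congr rfl (fun l _ => ?_)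
      show (h - if h = m + 1 + 1 then 1 else 0) * wt (m + 1 - 1) l = _
      norm_num
    · intro a _ b _ hab
      simp only [Finset.disjoint_left]
      intro l hla hlb
      simp only [Finset.mem_image] at hla hlb
      obtain ⟨x, _, hx⟩ := hla
      obtain ⟨y, _, hy⟩ := hlb
      apply hab
      rw [← hx] at hy
      exact (List.cons.injEq _ _ _ _ ▸ hy).1.symm

lemma HSet_mem_iff : ∀ (m : ℕ) (c : ℕ), 1 ≤ c → ∀ l : List ℕ,
    (l ∈ HSet m c ↔
      l.length = m ∧ (∀ j, j+1 < m → l.getD j 0 ≤ l.getD (j+1) 0 + 1) ∧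
      (∀ j < m, 1 ≤ l.getD j 0 ∧ l.getD j 0 + j ≤ m+1) ∧
      (m = 0 → c ≤ 1) ∧ (0 < m → c ≤ l.getD 0 0)) := by
  intro m
  induction m with
  | zero =>
    intro c hc l
    by_cases h : c ≤ 1
    · simp only [HSet, if_pos h, Finset.mem_singleton]
      constructor
      · rintro rfl; exact ⟨rfl, by omega, by omega, fun _ => h, by omega⟩
      · rintro ⟨h1, -, -, -, -⟩; exact List.length_eq_zero_iff.mp h1
    · simp only [HSet, if_neg h, Finset.notMem_empty, false_iff]
      rintro ⟨-, -, -, h4, -⟩; exact h (h4 (by simp))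
  | succ m ih =>
    intro c hc l
    constructor
    · intro hl
      simp only [HSet, Finset.mem_biUnion, Finset.mem_image, Finset.mem_Icc] at hl
      obtain ⟨h, ⟨hch, hh2⟩, t, ht, rfl⟩ := hl
      have hmax : 1 ≤ max (h-1) 1 := le_max_right _ _
      obtain ⟨htl, htchain, htbd, htz, hthd⟩ := (ih _ hmax t).mp ht
      refine ⟨by simp [htl], ?_, ?_, by omega, ?_⟩
      · intro j hj
        cases j with
        | zero =>
          simp only [List.getD_cons_zero, List.getD_cons_succ]
          rcases Nat.eq_zero_or_pos m with hm | hm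
          · omega
          · have := hthd hm
            have := (htbd 0 hm).1
            omega
        | succ j =>
          simp only [List.getD_cons_succ]
          exact htchain j (by omega)
      · intro j hj
        cases j with
        | zero =>
          simp only [List.getD_cons_zero]
          omega
        | succ j =>
          simp only [List.getD_cons_succ]
          have := htbd j (by omega)
          omega
      · intro _
        simp only [List.getD_cons_zero]
        omega
    · rintro ⟨hlen, hchain, hbd, -, hhd⟩
      cases l with
      | nil => simp at hlen
      | cons h t =>
        simp only [HSet, Finset.mem_biUnion, Finset.mem_image, Finset.mem_Icc]
        have hh := hbd 0 (by omega)
        simp only [List.getD_cons_zero] at hh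
        have hhd' := hhd (by omega)
        simp only [List.getD_cons_zero] at hhd'
        refine ⟨h, ⟨hhd', by omega⟩, t, ?_, rfl⟩
        refine (ih _ (le_max_right _ _) t).mpr ⟨by simpa using hlen, ?_, ?_, ?_, ?_⟩
        · intro j hj
          have := hchain (j+1) (by omega)
          simpa only [List.getD_cons_succ] using this
        · intro j hj
          have := hbd (j+1) (by omega)
          simp only [List.getD_cons_succ] at this
          omega
        · intro hm
          subst hm
          omega
        · intro hm
          have h0 := hchain 0 (by omega)
          have h1 := hbd 1 (by omega)
          simp only [List.getD_cons_zero, List.getD_cons_succ] at h0 h1 ⊢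
          omega

lemma wt_eq_prod : ∀ (l : List ℕ) (m : ℕ), l.length ≤ m →
    wt m l = ∏ j ∈ Finset.range l.length,
      (l.getD j 0 - if l.getD j 0 + j = m + 1 then 1 else 0) := by
  intro l
  induction l with
  | nil => intro m _; simp [wt]
  | cons h t ih =>
    intro m hm
    simp only [List.length_cons] at hm ⊢
    rw [Finset.prod_range_succ']
    simp only [List.getD_cons_zero, List.getD_cons_succ]
    rw [show wt m (h :: t) = (h - if h = m + 1 then 1 else 0) * wt (m-1) t from rfl]
    rw [ih (m-1) (by omega)]
    rw [mul_comm]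
    congr 1
    · refine Finset.prod_congr rfl (fun j _ => ?_)
      congr 2
      exact propext (by omega)







lemma mem_dyckPaths {L : ℕ} {D : Finset ℕ} : D ∈ dyckPaths L ↔ IsDyck L D := by
  simp only [dyckPaths, Finset.mem_filter, Finset.mem_powerset]
  exact ⟨fun h => h.2, fun h => ⟨h.1, h⟩⟩

lemma sort_getD_mem (D : Finset ℕ) {j : ℕ} (hj : j < (D.sort (· ≤ ·)).length) :
    (D.sort (· ≤ ·)).getD j 0 ∈ D := by
  rw [List.getD_eq_getElem _ _ hj]
  exact (Finset.mem_sort _).mp (List.getElem_mem _)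

lemma sort_strict (D : Finset ℕ) {i j : ℕ} (hij : i < j) (hj : j < (D.sort (· ≤ ·)).length) :
    (D.sort (· ≤ ·)).getD i 0 < (D.sort (· ≤ ·)).getD j 0 := by
  rw [List.getD_eq_getElem _ _ (lt_trans hij hj), List.getD_eq_getElem _ _ hj]
  exact List.pairwise_iff_getElem.mp (Finset.sortedLT_sort D).pairwise i j _ _ hij

lemma sort_gap (D : Finset ℕ) {i : ℕ} : ∀ d : ℕ, i + d < (D.sort (· ≤ ·)).length →
    (D.sort (· ≤ ·)).getD i 0 + d ≤ (D.sort (· ≤ ·)).getD (i + d) 0 := by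
  intro d
  induction d with
  | zero => intro _; simp
  | succ d ih =>
    intro hd
    have h1 := ih (by omega)
    have h2 := sort_strict D (show i + d < i + (d+1) by omega) hd
    omega

lemma card_filter_le_eq (D : Finset ℕ) (k : ℕ) :
    (D.filter (· ≤ k)).card =
      ((Finset.range (D.sort (· ≤ ·)).length).filter
        (fun t => (D.sort (· ≤ ·)).getD t 0 ≤ k)).card := by
  refine (Finset.card_bij (fun t _ => (D.sort (· ≤ ·)).getD t 0) ?_ ?_ ?_).symm
  · intro t ht
    simp only [Finset.mem_filter, Finset.mem_range] at ht
    exact Finset.mem_filter.mpr ⟨sort_getD_mem D ht.1, ht.2⟩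
  · intro a ha b hb hab
    simp only [Finset.mem_filter, Finset.mem_range] at ha hb
    by_contra hne
    rcases Nat.lt_or_ge a b with h | h
    · exact absurd hab (Nat.ne_of_lt (sort_strict D h hb.1))
    · exact absurd hab.symm (Nat.ne_of_lt (sort_strict D (by omega) ha.1))
  · intro x hx
    simp only [Finset.mem_filter] at hx
    obtain ⟨t, ht, hteq⟩ := List.mem_iff_getElem.mp ((Finset.mem_sort (α := ℕ) (· ≤ ·)).mpr hx.1)
    refine ⟨t, Finset.mem_filter.mpr ⟨Finset.mem_range.mpr ht, ?_⟩, ?_⟩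
    · rw [List.getD_eq_getElem _ _ ht, hteq]; exact hx.2
    · show (D.sort (· ≤ ·)).getD t 0 = x
      rw [List.getD_eq_getElem _ _ ht, hteq]

lemma count_lower (D : Finset ℕ) {j : ℕ} (hj : j < (D.sort (· ≤ ·)).length) :
    j + 1 ≤ (D.filter (· ≤ (D.sort (· ≤ ·)).getD j 0)).card := by
  rw [card_filter_le_eq]
  have hsub : Finset.range (j+1) ⊆ (Finset.range (D.sort (· ≤ ·)).length).filter
      (fun t => (D.sort (· ≤ ·)).getD t 0 ≤ (D.sort (· ≤ ·)).getD j 0) := by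
    intro t ht
    simp only [Finset.mem_range] at ht
    refine Finset.mem_filter.mpr ⟨Finset.mem_range.mpr (by omega), ?_⟩
    rcases Nat.lt_or_ge t j with h | h
    · exact le_of_lt (sort_strict D h hj)
    · have : t = j := by omega
      subst this; exact le_rfl
  simpa using Finset.card_le_card hsub

lemma count_dyck {L : ℕ} {D : Finset ℕ} (hD : IsDyck L D) {j : ℕ}
    (hj : j < (D.sort (· ≤ ·)).length) : 2*j+2 ≤ (D.sort (· ≤ ·)).getD j 0 := by
  have hmem := sort_getD_mem D hj
  have hk := hD.1 hmem
  simp only [Finset.mem_Icc] at hk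
  have := hD.2.2 _ hk.2
  have := count_lower D hj
  omega

/-- converse prefix condition -/
lemma prefix_of_lb {D : Finset ℕ}
    (hlb : ∀ t < (D.sort (· ≤ ·)).length, 2*t+2 ≤ (D.sort (· ≤ ·)).getD t 0) (k : ℕ) :
    2 * (D.filter (· ≤ k)).card ≤ k := by
  rw [card_filter_le_eq]
  set I := (Finset.range (D.sort (· ≤ ·)).length).filter
    (fun t => (D.sort (· ≤ ·)).getD t 0 ≤ k) with hI
  rcases Finset.eq_empty_or_nonempty I with h | h
  · simp [h]
  · have hM := Finset.max'_mem I h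
    set M := I.max' h with hMdef
    simp only [hI, Finset.mem_filter, Finset.mem_range] at hM
    have hsub : I ⊆ Finset.range (M+1) := by
      intro t ht
      exact Finset.mem_range.mpr (by have := Finset.le_max' I t ht; omega)
    have hcard := Finset.card_le_card hsub
    simp only [Finset.card_range] at hcard
    have := hlb M hM.1
    omega

lemma sort_length_dyck {n : ℕ} {D : Finset ℕ} (hD : IsDyck (2*n+2) D) :
    (D.sort (· ≤ ·)).length = n + 1 := by
  rw [Finset.length_sort]
  have := hD.2.1
  omega

lemma sort_upper_dyck {n : ℕ} {D : Finset ℕ} (hD : IsDyck (2*n+2) D) {j : ℕ} (hj : j ≤ n) :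
    (D.sort (· ≤ ·)).getD j 0 ≤ n + j + 2 := by
  have hlen := sort_length_dyck hD
  have hgap := sort_gap D (i := j) (n - j) (by omega)
  rw [show j + (n - j) = n by omega] at hgap
  have hmem := sort_getD_mem D (j := n) (by omega)
  have := hD.1 hmem
  simp only [Finset.mem_Icc] at this
  omega

lemma sort_top_dyck {n : ℕ} {D : Finset ℕ} (hD : IsDyck (2*n+2) D) :
    (D.sort (· ≤ ·)).getD n 0 = 2*n+2 := by
  have hlen := sort_length_dyck hD
  have h1 := count_dyck hD (j := n) (by omega)
  have h2 := sort_upper_dyck hD (le_refl n)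
  omega

lemma hstar_cond {n : ℕ} {D : Finset ℕ} (hD : IsDyck (2*n+2) D) {j : ℕ} (hj : j < n) :
    (Finset.Ioc ((D.sort (· ≤ ·)).getD j 0) (2*n+2) ⊆ D ↔
      (D.sort (· ≤ ·)).getD j 0 = n + j + 2) := by
  have hlen := sort_length_dyck hD
  have hub := sort_upper_dyck hD (le_of_lt hj)
  have hlb := count_dyck hD (j := j) (by omega)
  constructor
  · intro hsub
    have hcount := count_lower D (j := j) (by omega)
    -- Ioc ⊆ filter of D with (· > s_j)
    have h1 : Finset.Ioc ((D.sort (· ≤ ·)).getD j 0) (2*n+2) ⊆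
        D.filter (fun x => ¬ (x ≤ (D.sort (· ≤ ·)).getD j 0)) := by
      intro x hx
      simp only [Finset.mem_Ioc] at hx
      exact Finset.mem_filter.mpr ⟨hsub (Finset.mem_Ioc.mpr hx), by omega⟩
    have h2 := Finset.card_le_card h1
    rw [Nat.card_Ioc] at h2
    have h3 := Finset.card_filter_add_card_filter_not
      (s := D) (p := (· ≤ (D.sort (· ≤ ·)).getD j 0))
    have hcardD : D.card = n + 1 := by have := hD.2.1; omega
    omega
  · intro heq
    intro x hx
    simp only [Finset.mem_Ioc] at hx
    have hb : ∀ b, j ≤ b → b ≤ n → (D.sort (· ≤ ·)).getD b 0 = n + b + 2 := by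
      intro b hb1 hb2
      have hgap := sort_gap D (i := j) (b - j) (by omega)
      rw [show j + (b - j) = b by omega] at hgap
      have := sort_upper_dyck hD hb2
      omega
    set b := j + (x - (n + j + 2)) with hbdef
    have hble : b ≤ n := by omega
    have hxb : (D.sort (· ≤ ·)).getD b 0 = x := by
      rw [hb b (by omega) hble]; omega
    rw [← hxb]
    exact sort_getD_mem D (by omega)

def hts (n : ℕ) (D : Finset ℕ) : List ℕ :=
  (List.range n).map (fun j => (D.sort (· ≤ ·)).getD j 0 - (2*j+1))

def posl (n : ℕ) (l : List ℕ) : List ℕ :=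
  (List.range n).map (fun j => l.getD j 0 + (2*j+1)) ++ [2*n+2]

def pfin (n : ℕ) (l : List ℕ) : Finset ℕ := (posl n l).toFinset

lemma hts_length (n : ℕ) (D : Finset ℕ) : (hts n D).length = n := by simp [hts]

lemma hts_getD (n : ℕ) (D : Finset ℕ) {j : ℕ} (hj : j < n) :
    (hts n D).getD j 0 = (D.sort (· ≤ ·)).getD j 0 - (2*j+1) := by
  rw [List.getD_eq_getElem _ _ (by simp [hts, hj])]
  simp [hts]

lemma posl_length (n : ℕ) (l : List ℕ) : (posl n l).length = n + 1 := by simp [posl]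

lemma posl_getD_lt (n : ℕ) (l : List ℕ) {j : ℕ} (hj : j < n) :
    (posl n l).getD j 0 = l.getD j 0 + (2*j+1) := by
  rw [List.getD_eq_getElem _ _ (by simp [posl_length, hj]; omega)]
  simp only [posl]
  rw [List.getElem_append_left (by simpa using hj)]
  simp

lemma posl_getD_last (n : ℕ) (l : List ℕ) : (posl n l).getD n 0 = 2*n+2 := by
  rw [List.getD_eq_getElem _ _ (by simp [posl_length])]
  simp only [posl]
  rw [List.getElem_append_right (by simp)]
  simp

lemma hts_mem_HSet {n : ℕ} {D : Finset ℕ} (hD : IsDyck (2*n+2) D) : hts n D ∈ HSet n 1 := by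
  rw [HSet_mem_iff n 1 le_rfl]
  have hlen := sort_length_dyck hD
  refine ⟨hts_length n D, ?_, ?_, fun _ => le_rfl, ?_⟩
  · intro j hj
    rw [hts_getD n D (by omega), hts_getD n D (by omega)]
    have h1 := count_dyck hD (j := j) (by omega)
    have h2 := count_dyck hD (j := j+1) (by omega)
    have h3 := sort_strict D (show j < j+1 by omega) (show j+1 < _ by omega)
    omega
  · intro j hj
    rw [hts_getD n D hj]
    have h1 := count_dyck hD (j := j) (by omega)
    have h2 := sort_upper_dyck hD (j := j) (by omega)
    omega
  · intro hn
    rw [hts_getD n D hn]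
    have h1 := count_dyck hD (j := 0) (by omega)
    omega

lemma pfin_hts {n : ℕ} {D : Finset ℕ} (hD : IsDyck (2*n+2) D) : pfin n (hts n D) = D := by
  have hlen := sort_length_dyck hD
  have hposl : posl n (hts n D) = D.sort (· ≤ ·) := by
    apply List.ext_getElem (by rw [posl_length]; omega)
    intro j h1 h2
    have hj : j < n + 1 := by rw [posl_length] at h1; omega
    have e2 : (D.sort (· ≤ ·)).getD j 0 = (D.sort (· ≤ ·))[j] := List.getD_eq_getElem _ _ h2
    rcases Nat.lt_or_ge j n with hjn | hjn
    · have e1 := posl_getD_lt n (hts n D) hjn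
      rw [List.getD_eq_getElem _ _ h1] at e1
      rw [e1, hts_getD n D hjn]
      have h3 := count_dyck hD (j := j) (by omega)
      omega
    · have hj' : j = n := by omega
      have e1 : (posl n (hts n D))[j]'h1 = 2*n+2 := by
        rw [← List.getD_eq_getElem _ _ h1, hj', posl_getD_last]
      have e3 := sort_top_dyck hD
      rw [← hj'] at e3
      omega
  rw [pfin, hposl, Finset.sort_toFinset]

lemma l_gap {n : ℕ} {l : List ℕ} (hchain : ∀ j, j+1 < n → l.getD j 0 ≤ l.getD (j+1) 0 + 1) :
    ∀ a d, a + d < n → l.getD a 0 ≤ l.getD (a+d) 0 + d := by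
  intro a d
  induction d with
  | zero => intro _; simp
  | succ d ih =>
    intro hd
    have h1 := ih (by omega)
    have h2 := hchain (a+d) (by omega)
    rw [show a + (d+1) = (a+d)+1 by omega]
    omega

lemma posl_sorted {n : ℕ} {l : List ℕ} (hl : l ∈ HSet n 1) : (posl n l).Pairwise (· < ·) := by
  obtain ⟨hlen, hchain, hbd, -, -⟩ := (HSet_mem_iff n 1 le_rfl l).mp hl
  rw [List.pairwise_iff_getElem]
  intro a b ha hb hab
  rw [posl_length] at ha hb
  have gel : ∀ t (h : t < (posl n l).length), t < n → (posl n l)[t] = l.getD t 0 + (2*t+1) := by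
    intro t h htn
    rw [← List.getD_eq_getElem _ _ h]
    exact posl_getD_lt n l htn
  rcases Nat.lt_or_ge b n with hbn | hbn
  · rw [gel a (by rw [posl_length]; omega) (by omega), gel b (by rw [posl_length]; omega) hbn]
    have := l_gap hchain a (b - a) (by omega)
    rw [show a + (b - a) = b by omega] at this
    omega
  · have hb' : b = n := by omega
    rw [gel a (by rw [posl_length]; omega) (by omega)]
    rw [show (posl n l)[b]'(by rw [posl_length]; omega) = 2*n+2 by
      rw [← List.getD_eq_getElem _ _ (by rw [posl_length]; omega), hb', posl_getD_last]]
    have := hbd a (by omega)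
    omega

lemma sort_pfin {n : ℕ} {l : List ℕ} (hl : l ∈ HSet n 1) :
    (pfin n l).sort (· ≤ ·) = posl n l := by
  have hs := posl_sorted hl
  exact (List.toFinset_sort (· ≤ ·) hs.nodup).mpr (hs.imp le_of_lt)

lemma pfin_dyck {n : ℕ} {l : List ℕ} (hl : l ∈ HSet n 1) : IsDyck (2*n+2) (pfin n l) := by
  obtain ⟨hlen, hchain, hbd, -, -⟩ := (HSet_mem_iff n 1 le_rfl l).mp hl
  have hsort := sort_pfin hl
  have hlen' : ((pfin n l).sort (· ≤ ·)).length = n + 1 := by rw [hsort, posl_length]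
  have hval : ∀ t < n+1, 2*t+2 ≤ ((pfin n l).sort (· ≤ ·)).getD t 0 ∧
      ((pfin n l).sort (· ≤ ·)).getD t 0 ≤ 2*n+2 := by
    intro t ht
    rw [hsort]
    rcases Nat.lt_or_ge t n with htn | htn
    · rw [posl_getD_lt n l htn]
      have := hbd t htn
      omega
    · have ht' : t = n := by omega
      rw [ht', posl_getD_last n l]
      omega
  refine ⟨?_, ?_, ?_⟩
  · intro x hx
    rw [pfin, List.mem_toFinset] at hx
    have : x ∈ (pfin n l).sort (· ≤ ·) := by
      rw [hsort]; exact hx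
    obtain ⟨t, ht, rfl⟩ := List.mem_iff_getElem.mp this
    rw [hlen'] at ht
    have := hval t ht
    rw [List.getD_eq_getElem _ _ (by omega)] at this
    simp only [Finset.mem_Icc]
    omega
  · rw [← Finset.length_sort (· ≤ ·), hlen']
    omega
  · intro k _
    refine prefix_of_lb ?_ k
    intro t ht
    rw [hlen'] at ht
    exact (hval t ht).1

lemma hts_pfin {n : ℕ} {l : List ℕ} (hl : l ∈ HSet n 1) : hts n (pfin n l) = l := by
  obtain ⟨hlen, -, -, -, -⟩ := (HSet_mem_iff n 1 le_rfl l).mp hl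
  have hsort := sort_pfin hl
  apply List.ext_getElem (by rw [hts_length, hlen])
  intro j h1 h2
  rw [hts_length] at h1
  rw [← List.getD_eq_getElem _ _ (show j < (hts n (pfin n l)).length by rw [hts_length]; omega)]
  rw [hts_getD n (pfin n l) h1, hsort, posl_getD_lt n l h1]
  have e2 : l.getD j 0 = l[j]'h2 := List.getD_eq_getElem _ _ h2
  omega

lemma prod_hstar {n : ℕ} {D : Finset ℕ} (hD : IsDyck (2*n+2) D) :
    ∏ i ∈ Finset.Icc 1 n, hstar (2*n+2) D i = wt n (hts n D) := by
  rw [wt_eq_prod (hts n D) n (by rw [hts_length])]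
  rw [hts_length]
  refine Finset.prod_nbij' (fun i => i - 1) (fun j => j + 1) ?_ ?_ ?_ ?_ ?_
  · intro i hi
    simp only [Finset.mem_Icc] at hi
    simp only [Finset.mem_range]
    omega
  · intro j hj
    simp only [Finset.mem_range] at hj
    simp only [Finset.mem_Icc]
    omega
  · intro i hi
    simp only [Finset.mem_Icc] at hi
    show i - 1 + 1 = i
    omega
  · intro j _
    show j + 1 - 1 = j
    omega
  · intro i hi
    simp only [Finset.mem_Icc] at hi
    obtain ⟨j, rfl⟩ : ∃ j, i = j + 1 := ⟨i - 1, by omega⟩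
    have hjn : j < n := by omega
    simp only [Nat.add_sub_cancel]
    have hlen := sort_length_dyck hD
    have hdstep : dstep D (j+1) = (D.sort (· ≤ ·)).getD j 0 := rfl
    have hcond := hstar_cond hD hjn
    have hlb := count_dyck hD (j := j) (by omega)
    have hub := sort_upper_dyck hD (j := j) (by omega)
    have hhts := hts_getD n D hjn
    rw [hstar, ht, hdstep]
    by_cases hc : (D.sort (· ≤ ·)).getD j 0 = n + j + 2
    · rw [if_pos (hcond.mpr hc), if_pos (by omega)]
      omega
    · rw [if_neg (fun hsub => hc (hcond.mp hsub)), if_neg (by omega)]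
      omega

end Aux

/-- `∑_{β ∈ D_{2n+2}} ∏_{i=1}^n h_i^*(β) = 2·4·6⋯(2n)`. -/
theorem stmt2 (n : ℕ) (hn : 1 ≤ n) :
    ∑ β ∈ dyckPaths (2 * n + 2), ∏ i ∈ Finset.Icc 1 n, hstar (2 * n + 2) β i =
      ∏ i ∈ Finset.range n, (2 * i + 2) := by
  have key : ∑ β ∈ dyckPaths (2 * n + 2), ∏ i ∈ Finset.Icc 1 n, hstar (2 * n + 2) β i
      = ∑ l ∈ HSet n 1, wt n l :=
    Finset.sum_nbij' (fun D => hts n D) (fun l => pfin n l)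
      (fun D hD => hts_mem_HSet (mem_dyckPaths.mp hD))
      (fun l hl => mem_dyckPaths.mpr (pfin_dyck hl))
      (fun D hD => pfin_hts (mem_dyckPaths.mp hD))
      (fun l hl => hts_pfin hl)
      (fun D hD => prod_hstar (mem_dyckPaths.mp hD))
  rw [key, sum_wt n 1, Vfun_eq_prod n hn]
end

section
/- For every n ≥ 1 and any variable q, the sum over all Dyck paths α of length 2n of ∏_{i=1}^n q^{h_i(α)-1}·[h_i(α)]_q equals [1]_q·[3]_q···[2n-1]_q, where [k]_q = 1 + q + ··· + q^{k-1}. -/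
open Finset

open Polynomial

noncomputable def qintQ (k : ℕ) : Polynomial ℤ := ∑ j ∈ Finset.range k, Polynomial.X ^ (2*j)

noncomputable def qb : ℕ → ℕ → Polynomial ℤ
  | _, 0 => 1
  | 0, _+1 => 0
  | a+1, b+1 => qb a b + (X:Polynomial ℤ)^(2*(b+1)) * qb a (b+1)

lemma qb_zero_right (a : ℕ) : qb a 0 = 1 := by cases a <;> rfl

lemma qb_eq_zero {a b : ℕ} (h : a < b) : qb a b = 0 := by
  induction a generalizing b with
  | zero => cases b with
    | zero => omega
    | succ b => rfl
  | succ a ih =>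
    cases b with
    | zero => omega
    | succ b =>
      show qb a b + _ * qb a (b+1) = 0
      rw [ih (by omega), ih (by omega), mul_zero, add_zero]

lemma qint_succ (k : ℕ) : qint (k+1) = qint k + X^k := by
  rw [qint, Finset.sum_range_succ, ← qint]

lemma qintQ_succ (k : ℕ) : qintQ (k+1) = qintQ k + X^(2*k) := by
  rw [qintQ, Finset.sum_range_succ, ← qintQ]

lemma qint_add (x y : ℕ) : qint (x + y) = qint x + X^x * qint y := by
  induction y with
  | zero => simp [qint]
  | succ y ih =>
    rw [← Nat.add_assoc, qint_succ, qint_succ, ih, pow_add]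
    ring

lemma qintQ_add (x y : ℕ) : qintQ (x + y) = qintQ x + X^(2*x) * qintQ y := by
  induction y with
  | zero => simp [qintQ]
  | succ y ih =>
    rw [← Nat.add_assoc, qintQ_succ, qintQ_succ, ih, Nat.mul_add, pow_add]
    ring

lemma qint_two_mul (m : ℕ) : qint (2 * m) = qint 2 * qintQ m := by
  induction m with
  | zero => simp [qint, qintQ]
  | succ m ih =>
    rw [Nat.mul_succ, qint_add, ih, qintQ_succ]
    have h2 : qint 2 = 1 + X := by
      rw [qint]; rw [Finset.sum_range_succ, Finset.sum_range_one]; ring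
    rw [h2]; ring

lemma qb_absorb (a : ℕ) : ∀ b, qintQ (a - b) * qb a b = qintQ (b+1) * qb a (b+1) := by
  induction a with
  | zero =>
    intro b
    cases b with
    | zero => simp [qb_zero_right, qb_eq_zero (by omega : (0:ℕ) < 1), qintQ]
    | succ b => rw [qb_eq_zero (by omega), qb_eq_zero (by omega)]; ring
  | succ a ih =>
    intro b
    have hq1 : qintQ 1 = 1 := by simp [qintQ]
    cases b with
    | zero =>
      have h1 : qb (a+1) 1 = qb a 0 + X^(2*1) * qb a 1 := rfl
      have h0 := ih 0
      rw [qb_zero_right, mul_one, Nat.sub_zero, hq1, one_mul] at h0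
      rw [Nat.sub_zero, qb_zero_right, mul_one, hq1, one_mul, h1, qb_zero_right, ← h0,
        show a + 1 = 1 + a from by ring, qintQ_add, hq1]
    | succ b =>
      by_cases hab : a + 1 < b + 1
      · rw [qb_eq_zero hab, qb_eq_zero (by omega)]; ring
      · have hb : b ≤ a := by omega
        have e1 : qb (a+1) (b+1) = qb a b + X^(2*(b+1)) * qb a (b+1) := rfl
        have e2 : qb (a+1) (b+1+1) = qb a (b+1) + X^(2*(b+1+1)) * qb a (b+1+1) := rfl
        have i1 := ih b
        have i2 := ih (b+1)
        have hs : a + 1 - (b+1) = a - b := by omega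
        rcases Nat.eq_or_lt_of_le hb with h | h
        · subst h
          rw [e1, e2, qb_eq_zero (by omega : b < b + 1), qb_eq_zero (by omega : b < b + 1 + 1), hs]
          simp [qintQ]
        · have d1 : (b+1) + (a-b) = a + 1 := by omega
          have d2 : (b+1+1) + (a-(b+1)) = a + 1 := by omega
          have A := qintQ_add (b+1) (a-b)
          have B := qintQ_add (b+1+1) (a-(b+1))
          rw [d1] at A; rw [d2] at B
          rw [e1, e2, hs]
          linear_combination i1 + X^(2*(b+1+1)) * i2 + (B - A) * (qb a (b+1))

/-- Transfer recursion: weighted count of nonneg. paths of length m ending at height k. -/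
noncomputable def EE : ℕ → ℕ → Polynomial ℤ
  | 0, 0 => 1
  | 0, _+1 => 0
  | m+1, k => (if k = 0 then 0 else EE m (k-1)) + X^k * qint (k+1) * EE m (k+1)

/-- Closed form. -/
noncomputable def Phi (m k : ℕ) : Polynomial ℤ :=
  if m % 2 = k % 2 then qb (m/2) (k/2) * ∏ j ∈ Finset.Ico ((k+1)/2) ((m+1)/2), qint (2*j+1)
  else 0

lemma qb_self (a : ℕ) : qb a a = 1 := by
  induction a with
  | zero => rfl
  | succ a ih =>
    show qb a a + X^(2*(a+1)) * qb a (a+1) = 1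
    rw [ih, qb_eq_zero (by omega), mul_zero, add_zero]

lemma star1 (a b : ℕ) (hb : b ≤ a) :
    qb a b * qint (2*a+1) =
      qb a b * qint (2*b+1) + X^(2*b+1) * qint (2*b+2) * qb a (b+1) := by
  have habs := qb_absorb a b
  have hsplit : qint (2*a+1) = qint (2*b+1) + X^(2*b+1) * qint (2*(a-b)) := by
    have h : 2*a+1 = (2*b+1) + 2*(a-b) := by omega
    rw [h, qint_add]
  have h2ab := qint_two_mul (a-b)
  have h22 : qint (2*b+2) = qint 2 * qintQ (b+1) := by
    rw [show 2*b+2 = 2*(b+1) from by ring, qint_two_mul]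
  linear_combination qb a b * hsplit + (qb a b * X^(2*b+1)) * h2ab
    - (X^(2*b+1) * qb a (b+1)) * h22 + (X^(2*b+1) * qint 2) * habs

lemma Phi_even (a b : ℕ) :
    Phi (2*a) (2*b) = qb a b * ∏ j ∈ Finset.Ico b a, qint (2*j+1) := by
  rw [Phi, if_pos (by omega)]
  rw [show 2*a/2 = a from by omega, show 2*b/2 = b from by omega,
    show (2*b+1)/2 = b from by omega, show (2*a+1)/2 = a from by omega]

lemma Phi_odd (a b : ℕ) :
    Phi (2*a+1) (2*b+1) = qb a b * ∏ j ∈ Finset.Ico (b+1) (a+1), qint (2*j+1) := by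
  rw [Phi, if_pos (by omega)]
  rw [show (2*a+1)/2 = a from by omega, show (2*b+1)/2 = b from by omega,
    show (2*b+1+1)/2 = b+1 from by omega, show (2*a+1+1)/2 = a+1 from by omega]

lemma Phi_rec (m k : ℕ) :
    Phi (m+1) k = (if k = 0 then 0 else Phi m (k-1)) + X^k * qint (k+1) * Phi m (k+1) := by
  by_cases hpar : m % 2 = k % 2
  · have h1 : Phi (m+1) k = 0 := by rw [Phi, if_neg (by omega)]
    have h2 : Phi m (k+1) = 0 := by rw [Phi, if_neg (by omega)]
    rw [h1, h2, mul_zero]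
    rcases Nat.eq_zero_or_pos k with hk | hk
    · simp [hk]
    · rw [if_neg (by omega), Phi, if_neg (by omega)]; ring
  · rcases Nat.even_or_odd k with ⟨b, hkb⟩ | ⟨b, hkb⟩
    · -- k = 2b even, m = 2a+1 odd
      obtain ⟨a, hma⟩ : ∃ a, m = 2*a+1 := ⟨m/2, by omega⟩
      subst hma
      have hk2 : k = 2*b := by omega
      subst hk2
      have e0 : Phi (2*a+1+1) (2*b) = qb (a+1) b * ∏ j ∈ Finset.Ico b (a+1), qint (2*j+1) := by
        rw [show 2*a+1+1 = 2*(a+1) from by ring, Phi_even]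
      have e2 := Phi_odd a b
      by_cases hba : b ≤ a
      · have hprod : ∏ j ∈ Finset.Ico b (a+1), qint (2*j+1)
            = qint (2*b+1) * ∏ j ∈ Finset.Ico (b+1) (a+1), qint (2*j+1) :=
          Finset.prod_eq_prod_Ico_succ_bot (by omega : b < a+1) _
        rcases Nat.eq_zero_or_pos b with hb0 | hb0
        · subst hb0
          rw [if_pos rfl, e0, e2, hprod, zero_add, qb_zero_right, qb_zero_right]
          norm_num
        · rw [if_neg (by omega), e0, e2]
          have e1 : Phi (2*a+1) (2*b-1) = qb a (b-1) * ∏ j ∈ Finset.Ico b (a+1), qint (2*j+1) := by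
            rw [show 2*b-1 = 2*(b-1)+1 from by omega, Phi_odd,
              show b-1+1 = b from by omega]
          rw [e1, hprod]
          have hpas : qb (a+1) b = qb a (b-1) + X^(2*b) * qb a b := by
            obtain ⟨c, rfl⟩ : ∃ c, b = c + 1 := ⟨b-1, by omega⟩
            simp only [Nat.add_sub_cancel]
            rfl
          rw [hpas]
          ring
      · rcases Nat.eq_or_lt_of_le (show a + 1 ≤ b by omega) with hba' | hba'
        · -- b = a+1
          rw [if_neg (by omega), e0, e2]
          have e1 : Phi (2*a+1) (2*b-1) = qb a (b-1) * ∏ j ∈ Finset.Ico b (a+1), qint (2*j+1) := by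
            rw [show 2*b-1 = 2*(b-1)+1 from by omega, Phi_odd,
              show b-1+1 = b from by omega]
          rw [e1, ← hba', qb_eq_zero (by omega : a < a+1),
            show a+1-1 = a from by omega, qb_self, qb_self]
          ring
        · -- b > a+1
          rw [if_neg (by omega), e0, e2]
          have e1 : Phi (2*a+1) (2*b-1) = qb a (b-1) * ∏ j ∈ Finset.Ico b (a+1), qint (2*j+1) := by
            rw [show 2*b-1 = 2*(b-1)+1 from by omega, Phi_odd,
              show b-1+1 = b from by omega]
          rw [e1, qb_eq_zero (by omega : a < b-1), qb_eq_zero (by omega : a < b),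
            qb_eq_zero (by omega : a+1 < b)]
          ring
    · -- k = 2b+1 odd, m = 2a even
      obtain ⟨a, hma⟩ : ∃ a, m = 2*a := ⟨m/2, by omega⟩
      subst hma
      have hk2 : k = 2*b+1 := by omega
      subst hk2
      rw [if_neg (by omega)]
      have e0 := Phi_odd a b
      have e1 : Phi (2*a) (2*b+1-1) = qb a b * ∏ j ∈ Finset.Ico b a, qint (2*j+1) := by
        rw [show 2*b+1-1 = 2*b from by omega, Phi_even]
      have e2 : Phi (2*a) (2*b+1+1) = qb a (b+1) * ∏ j ∈ Finset.Ico (b+1) a, qint (2*j+1) := by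
        rw [show 2*b+1+1 = 2*(b+1) from by ring, Phi_even]
      rw [e0, e1, e2]
      by_cases hba : b < a
      · have hp1 : ∏ j ∈ Finset.Ico b a, qint (2*j+1)
            = qint (2*b+1) * ∏ j ∈ Finset.Ico (b+1) a, qint (2*j+1) :=
          Finset.prod_eq_prod_Ico_succ_bot hba _
        have hp2 : ∏ j ∈ Finset.Ico (b+1) (a+1), qint (2*j+1)
            = (∏ j ∈ Finset.Ico (b+1) a, qint (2*j+1)) * qint (2*a+1) :=
          Finset.prod_Ico_succ_top (by omega : b+1 ≤ a) _
        rw [hp1, hp2]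
        have hstar := star1 a b (by omega)
        linear_combination (∏ j ∈ Finset.Ico (b+1) a, qint (2*j+1)) * hstar
      · rcases Nat.eq_or_lt_of_le (show a ≤ b by omega) with hba' | hba'
        · subst hba'
          rw [qb_eq_zero (by omega : a < a+1)]
          rw [show Finset.Ico (a+1) (a+1) = ∅ from by simp,
            show Finset.Ico a a = ∅ from by simp]
          rw [qb_self]
          simp
        · rw [qb_eq_zero (by omega), qb_eq_zero (by omega)]
          ring

lemma EE_eq_Phi : ∀ m k, EE m k = Phi m k := by
  intro m
  induction m with
  | zero =>
    intro k
    cases k with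
    | zero =>
      show (1 : Polynomial ℤ) = Phi 0 0
      rw [Phi, if_pos rfl]
      simp [qb_zero_right]
    | succ k =>
      show (0 : Polynomial ℤ) = Phi 0 (k+1)
      by_cases h : 0 % 2 = (k+1) % 2
      · rw [Phi, if_pos h, qb_eq_zero (by omega), zero_mul]
      · rw [Phi, if_neg h]
  | succ m ih =>
    intro k
    rw [Phi_rec]
    show (if k = 0 then 0 else EE m (k-1)) + X^k * qint (k+1) * EE m (k+1) = _
    rw [ih (k+1)]
    rcases Nat.eq_zero_or_pos k with hk | hk
    · simp [hk]
    · rw [if_neg (by omega), if_neg (by omega), ih]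

lemma EE_closed (n : ℕ) : EE (2*n) 0 = ∏ j ∈ Finset.range n, qint (2*j+1) := by
  rw [EE_eq_Phi, show (0:ℕ) = 2*0 from rfl, Phi_even, qb_zero_right, one_mul]
  rw [Finset.range_eq_Ico]

-- rank lemma
lemma rank_lemma (D : Finset ℕ) (j : ℕ) (hj : j < (D.sort (· ≤ ·)).length) :
    (D.filter (· ≤ (D.sort (· ≤ ·)).get ⟨j, hj⟩)).card = j + 1 := by
  have hmono : StrictMono (D.sort (· ≤ ·)).get :=
    List.SortedLT.strictMono_get (Finset.sortedLT_sort D)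
  symm
  have h0 : j + 1 = (Finset.range (j+1)).card := by simp
  rw [h0]
  apply Finset.card_bij (fun i hi => (D.sort (· ≤ ·)).get ⟨i, by simp at hi; omega⟩)
  · intro a ha
    simp only [Finset.mem_filter]
    refine ⟨(Finset.mem_sort (· ≤ ·)).mp (List.get_mem _ _), ?_⟩
    simp only [Finset.mem_range] at ha
    exact hmono.monotone (by simp [Fin.le_def]; omega)
  · intro a ha b hb hab
    have := hmono.injective hab
    simpa [Fin.ext_iff] using this
  · intro x hx
    simp only [Finset.mem_filter] at hx
    obtain ⟨hxD, hxle⟩ := hx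
    rw [← Finset.mem_sort (· ≤ ·)] at hxD
    obtain ⟨idx, hidx⟩ := List.get_of_mem hxD
    have hlt : idx.val < j + 1 := by
      by_contra hgt
      push_neg at hgt
      have : (D.sort (· ≤ ·)).get ⟨j, hj⟩ < (D.sort (· ≤ ·)).get idx :=
        hmono (by simp [Fin.lt_def]; omega)
      omega
    exact ⟨idx.val, Finset.mem_range.mpr hlt, by simpa using hidx⟩

def hb (D : Finset ℕ) (d : ℕ) : ℕ := d + 1 - 2 * (D.filter (· ≤ d)).card

lemma reindex (D : Finset ℕ) (n : ℕ) (hcard : D.card = n) (g : ℕ → Polynomial ℤ) :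
    ∏ i ∈ Finset.Icc 1 n, g (ht D i) = ∏ d ∈ D, g (hb D d) := by
  have hlen : (D.sort (· ≤ ·)).length = n := by rw [Finset.length_sort, hcard]
  have hmono : StrictMono (D.sort (· ≤ ·)).get :=
    List.SortedLT.strictMono_get (Finset.sortedLT_sort D)
  apply Finset.prod_bij (fun i hi => dstep D i)
  · intro i hi
    simp only [Finset.mem_Icc] at hi
    rw [← Finset.mem_sort (· ≤ ·)]
    have h1 : i - 1 < (D.sort (· ≤ ·)).length := by omega
    rw [dstep, List.getD_eq_getElem _ _ h1]
    exact List.get_mem _ _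
  · intro a ha b hb' hab
    simp only [Finset.mem_Icc] at ha hb'
    have h1 : a - 1 < (D.sort (· ≤ ·)).length := by omega
    have h2 : b - 1 < (D.sort (· ≤ ·)).length := by omega
    rw [dstep, dstep, List.getD_eq_getElem _ _ h1, List.getD_eq_getElem _ _ h2] at hab
    have := hmono.injective hab
    simp only [Fin.ext_iff] at this
    omega
  · intro d hd
    rw [← Finset.mem_sort (· ≤ ·)] at hd
    obtain ⟨idx, hidx⟩ := List.get_of_mem hd
    refine ⟨idx.val + 1, Finset.mem_Icc.mpr ⟨by omega, by have := idx.isLt; omega⟩, ?_⟩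
    rw [dstep, Nat.add_sub_cancel, List.getD_eq_get _ _ idx, hidx]
  · intro i hi
    simp only [Finset.mem_Icc] at hi
    have h1 : i - 1 < (D.sort (· ≤ ·)).length := by omega
    congr 1
    rw [hb, ht]
    have hds : dstep D i = (D.sort (· ≤ ·)).get ⟨i-1, h1⟩ := by
      rw [dstep, List.getD_eq_get _ _ ⟨i-1, h1⟩]
    rw [hds, rank_lemma D (i-1) h1]
    omega

noncomputable def W (D : Finset ℕ) : Polynomial ℤ :=
  ∏ d ∈ D, ((X : Polynomial ℤ)^(hb D d - 1) * qint (hb D d))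

def pathsF (m k : ℕ) : Finset (Finset ℕ) :=
  (Finset.Icc 1 m).powerset.filter
    (fun D => 2*D.card + k = m ∧ ∀ j ≤ m, 2*(D.filter (· ≤ j)).card ≤ j)

lemma mem_pathsF {m k : ℕ} {D : Finset ℕ} :
    D ∈ pathsF m k ↔ D ⊆ Finset.Icc 1 m ∧ 2*D.card + k = m ∧
      ∀ j ≤ m, 2*(D.filter (· ≤ j)).card ≤ j := by
  simp [pathsF, and_assoc]

lemma W_insert (m k : ℕ) (D : Finset ℕ) (hD : D ⊆ Finset.Icc 1 m)
    (hcard : 2*D.card + (k+1) = m) :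
    W (insert (m+1) D) = X^k * qint (k+1) * W D := by
  have hle : ∀ d ∈ D, d ≤ m := fun d hd => by
    have := Finset.mem_Icc.mp (hD hd); omega
  have hnm : m+1 ∉ D := fun h => by have := hle _ h; omega
  rw [W, Finset.prod_insert hnm]
  have h1 : hb (insert (m+1) D) (m+1) = k+1 := by
    rw [hb]
    have hf : (insert (m+1) D).filter (· ≤ m+1) = insert (m+1) D := by
      apply Finset.filter_true_of_mem
      intro x hx
      rcases Finset.mem_insert.mp hx with h | h
      · show x ≤ m+1; omega
      · show x ≤ m+1; have := hle x h; omega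
    rw [hf, Finset.card_insert_of_notMem hnm]
    omega
  have h2 : ∀ d ∈ D, hb (insert (m+1) D) d = hb D d := by
    intro d hd
    rw [hb, hb, Finset.filter_insert, if_neg (show ¬ (m+1 ≤ d) by have := hle d hd; omega)]
  rw [h1, Nat.add_sub_cancel, W]
  rw [Finset.prod_congr rfl (fun d hd => by rw [h2 d hd])]

lemma sum_paths : ∀ m k, ∑ D ∈ pathsF m k, W D = EE m k := by
  intro m
  induction m with
  | zero =>
    intro k
    cases k with
    | zero =>
      have h0 : pathsF 0 0 = {∅} := by
        ext D
        simp only [mem_pathsF, Finset.mem_singleton]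
        constructor
        · rintro ⟨h1, h2, _⟩
          have : D ⊆ ∅ := by simpa using h1
          exact Finset.subset_empty.mp this
        · rintro rfl
          refine ⟨by simp, by simp, by intro j hj; interval_cases j; simp⟩
      rw [h0, Finset.sum_singleton, W, Finset.prod_empty]
      rfl
    | succ k =>
      have h0 : pathsF 0 (k+1) = ∅ := by
        ext D
        simp only [mem_pathsF, Finset.notMem_empty, iff_false]
        rintro ⟨_, h2, _⟩
        omega
      rw [h0, Finset.sum_empty]
      rfl
  | succ m ih =>
    intro k
    rw [← Finset.sum_filter_add_sum_filter_not (pathsF (m+1) k) (fun D => m+1 ∈ D)]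
    have hmem : ∑ D ∈ (pathsF (m+1) k).filter (fun D => m+1 ∈ D), W D
        = X^k * qint (k+1) * EE m (k+1) := by
      rw [← ih (k+1), Finset.mul_sum]
      symm
      apply Finset.sum_nbij' (fun D => insert (m+1) D) (fun D => D.erase (m+1))
      · -- maps into filter
        intro D hD
        rw [mem_pathsF] at hD
        obtain ⟨hsub, hcard, hpre⟩ := hD
        have hle : ∀ d ∈ D, d ≤ m := fun d hd => by
          have := Finset.mem_Icc.mp (hsub hd); omega
        have hnm : m+1 ∉ D := fun h => by have := hle _ h; omega
        rw [Finset.mem_filter, mem_pathsF]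
        refine ⟨⟨?_, ?_, ?_⟩, Finset.mem_insert_self _ _⟩
        · intro x hx
          rw [Finset.mem_Icc]
          rcases Finset.mem_insert.mp hx with h | h
          · omega
          · have := Finset.mem_Icc.mp (hsub h); omega
        · rw [Finset.card_insert_of_notMem hnm]; omega
        · intro j hj
          rcases Nat.lt_or_ge j (m+1) with h | h
          · rw [Finset.filter_insert, if_neg (show ¬ (m+1 ≤ j) by omega)]
            exact hpre j (by omega)
          · have hj' : j = m+1 := by omega
            subst hj'
            have hf : (insert (m+1) D).filter (· ≤ m+1) = insert (m+1) D := by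
              apply Finset.filter_true_of_mem
              intro x hx
              rcases Finset.mem_insert.mp hx with h | h
              · show x ≤ m+1; omega
              · show x ≤ m+1; have := hle x h; omega
            rw [hf, Finset.card_insert_of_notMem hnm]
            omega
      · -- erase maps back
        intro D hD
        rw [Finset.mem_filter, mem_pathsF] at hD
        obtain ⟨⟨hsub, hcard, hpre⟩, hmD⟩ := hD
        have hDpos : 0 < D.card := Finset.card_pos.mpr ⟨m+1, hmD⟩
        rw [mem_pathsF]
        refine ⟨?_, ?_, ?_⟩
        · intro x hx
          have hx1 := Finset.mem_of_mem_erase hx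
          have hx2 := Finset.ne_of_mem_erase hx
          have := Finset.mem_Icc.mp (hsub hx1)
          rw [Finset.mem_Icc]; omega
        · rw [Finset.card_erase_of_mem hmD]; omega
        · intro j hj
          have hf : (D.erase (m+1)).filter (· ≤ j) = D.filter (· ≤ j) := by
            rw [Finset.filter_erase]
            apply Finset.erase_eq_of_notMem
            simp only [Finset.mem_filter]
            rintro ⟨-, h2⟩
            omega
          rw [hf]
          exact hpre j (by omega)
      · intro D hD
        rw [mem_pathsF] at hD
        have hnm : m+1 ∉ D := fun h => by
          have := Finset.mem_Icc.mp (hD.1 h); omega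
        rw [Finset.erase_insert hnm]
      · intro D hD
        rw [Finset.mem_filter] at hD
        rw [Finset.insert_erase hD.2]
      · intro D hD
        rw [mem_pathsF] at hD
        exact (W_insert m k D hD.1 hD.2.1).symm
    have hnotmem : ∑ D ∈ (pathsF (m+1) k).filter (fun D => m+1 ∉ D), W D
        = if k = 0 then 0 else EE m (k-1) := by
      rcases Nat.eq_zero_or_pos k with hk | hk
      · subst hk
        rw [if_pos rfl]
        have h0 : (pathsF (m+1) 0).filter (fun D => m+1 ∉ D) = ∅ := by
          ext D
          simp only [Finset.mem_filter, mem_pathsF, Finset.notMem_empty, iff_false, not_and]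
          rintro ⟨hsub, hcard, hpre⟩ hnm
          have hDm : D.filter (· ≤ m) = D := by
            apply Finset.filter_true_of_mem
            intro x hx
            have h1 := Finset.mem_Icc.mp (hsub hx)
            have : x ≠ m+1 := fun h => hnm (h ▸ hx)
            show x ≤ m; omega
          have := hpre m (by omega)
          rw [hDm] at this
          omega
        rw [h0, Finset.sum_empty]
      · rw [if_neg (by omega), ← ih (k-1)]
        apply Finset.sum_congr
        · ext D
          simp only [Finset.mem_filter, mem_pathsF]
          constructor
          · rintro ⟨⟨hsub, hcard, hpre⟩, hnm⟩
            refine ⟨?_, by omega, fun j hj => hpre j (by omega)⟩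
            intro x hx
            have h1 := Finset.mem_Icc.mp (hsub hx)
            have : x ≠ m+1 := fun h => hnm (h ▸ hx)
            rw [Finset.mem_Icc]; omega
          · rintro ⟨hsub, hcard, hpre⟩
            have hle : ∀ d ∈ D, d ≤ m := fun d hd => by
              have := Finset.mem_Icc.mp (hsub hd); omega
            have hnm : m+1 ∉ D := fun h => by have := hle _ h; omega
            refine ⟨⟨?_, by omega, ?_⟩, hnm⟩
            · intro x hx
              have := Finset.mem_Icc.mp (hsub hx)
              rw [Finset.mem_Icc]; omega
            · intro j hj
              rcases Nat.lt_or_ge j (m+1) with h | h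
              · exact hpre j (by omega)
              · have hj' : j = m+1 := by omega
                subst hj'
                have hDf : D.filter (· ≤ m+1) = D := by
                  apply Finset.filter_true_of_mem
                  intro x hx
                  show x ≤ m+1; have := hle x hx; omega
                rw [hDf]
                omega
        · intros; rfl
    rw [hmem, hnotmem, add_comm]
    rfl

/-- `∑_{α ∈ D_{2n}} ∏_{i=1}^n q^{h_i(α)-1}[h_i(α)]_q = [1]_q[3]_q⋯[2n-1]_q`
as polynomials in `ℤ[q]`. -/
theorem stmt3 (n : ℕ) (hn : 1 ≤ n) :
    ∑ α ∈ dyckPaths (2 * n),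
        ∏ i ∈ Finset.Icc 1 n, (Polynomial.X : Polynomial ℤ) ^ (ht α i - 1) * qint (ht α i) =
      ∏ i ∈ Finset.range n, qint (2 * i + 1) := by
  classical
  have hset : dyckPaths (2*n) = pathsF (2*n) 0 := by
    ext D
    simp only [dyckPaths, Finset.mem_filter, Finset.mem_powerset, mem_pathsF, IsDyck]
    constructor
    · rintro ⟨h1, _, h3, h4⟩
      exact ⟨h1, by omega, h4⟩
    · rintro ⟨h1, h2, h3⟩
      exact ⟨h1, h1, by omega, h3⟩
  rw [hset]
  have hsum : ∑ α ∈ pathsF (2*n) 0,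
      ∏ i ∈ Finset.Icc 1 n, (Polynomial.X : Polynomial ℤ) ^ (ht α i - 1) * qint (ht α i)
      = ∑ α ∈ pathsF (2*n) 0, W α := by
    apply Finset.sum_congr rfl
    intro α hα
    rw [mem_pathsF] at hα
    have hcard : α.card = n := by omega
    exact reindex α n hcard (fun h => (Polynomial.X : Polynomial ℤ)^(h-1) * qint h)
  rw [hsum, sum_paths, EE_closed]
end
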